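/- arXiv:1205.1488 — 5 statements merged into one kernel-verified Lean document; each statement's English description precedes it below -/
import Mathlib

section
/- Let X be a measurable space whose σ-algebra is countably generated. Then the σ-algebra on the space of probability measures on X — namely, the coarsest σ-algebra making all evaluation maps ev_B : P ↦ P(B) measurable for measurable B ⊆ X — is countably generated. -/
open MeasureTheory

/-- The space of probability measures, as a subtype of the space of measures, carries
the σ-algebra induced by the σ-algebra on measures, i.e. the coarsest σ-algebra for
which all evaluation maps `P ↦ P B` (for `B` measurable) are measurable. -/
instance probabilityMeasureMeasurableSpace {X : Type*} [MeasurableSpace X] :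
    MeasurableSpace (ProbabilityMeasure X) :=
  Subtype.instMeasurableSpace

open MeasurableSpace in
lemma aux_iSup_cg {α ι : Type*} [Countable ι] {m : ι → MeasurableSpace α}
    (h : ∀ i, @CountablyGenerated α (m i)) : @CountablyGenerated α (⨆ i, m i) := by
  choose b hb hgen using fun i => (h i).isCountablyGenerated
  have : ⨆ i, m i = generateFrom (⋃ i, b i) := by
    calc ⨆ i, m i = ⨆ i, generateFrom (b i) := iSup_congr hgen
      _ = generateFrom (⋃ i, b i) := iSup_generateFrom b
  exact @CountablyGenerated.mk α (⨆ i, m i) ⟨⋃ i, b i, Set.countable_iUnion hb, this⟩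

/-- If the σ-algebra of `X` is countably generated, then so is the σ-algebra on the
space of probability measures on `X`. -/
theorem stmt_7 {X : Type*} [MeasurableSpace X] [MeasurableSpace.CountablyGenerated X] :
    MeasurableSpace.CountablyGenerated (ProbabilityMeasure X) := by
  open MeasurableSpace in
  obtain ⟨S, hSc, hSgen⟩ := MeasurableSpace.CountablyGenerated.isCountablyGenerated (α := X)
  set T : Set (Set X) := Set.sInter '' {t | t.Finite ∧ t ⊆ S} with hT
  have hTc : T.Countable := (Set.countable_setOf_finite_subset hSc).image _
  have hTmeas : ∀ s ∈ T, MeasurableSet s := by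
    rintro _ ⟨t, ⟨htf, htS⟩, rfl⟩
    refine MeasurableSet.sInter htf.countable fun u hu => ?_
    rw [hSgen]; exact MeasurableSpace.measurableSet_generateFrom (htS hu)
  have hTpi : IsPiSystem T := by
    rintro _ ⟨a, ⟨haf, haS⟩, rfl⟩ _ ⟨b, ⟨hbf, hbS⟩, rfl⟩ -
    exact ⟨a ∪ b, ⟨haf.union hbf, Set.union_subset haS hbS⟩, by rw [Set.sInter_union]⟩
  have hgenT : (inferInstance : MeasurableSpace X) = MeasurableSpace.generateFrom T := by
    refine le_antisymm ?_ (MeasurableSpace.generateFrom_le hTmeas)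
    rw [hSgen]
    refine MeasurableSpace.generateFrom_le fun s hs =>
      MeasurableSpace.measurableSet_generateFrom ?_
    exact ⟨{s}, ⟨Set.finite_singleton s, Set.singleton_subset_iff.2 hs⟩, (Set.sInter_singleton s).symm ▸ rfl⟩
  set m : MeasurableSpace (ProbabilityMeasure X) :=
    ⨆ s ∈ T, MeasurableSpace.comap (fun P : ProbabilityMeasure X => (P : Measure X) s)
      inferInstance with hm
  have hmcg : @MeasurableSpace.CountablyGenerated _ m := by
    rw [hm, iSup_subtype']
    haveI : Countable T := hTc.to_subtype
    exact aux_iSup_cg fun s => MeasurableSpace.CountablyGenerated.comap _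
  have key : ∀ ⦃s : Set X⦄, MeasurableSet s →
      @Measurable _ _ m _ (fun P : ProbabilityMeasure X => (P : Measure X) s) := by
    refine MeasurableSpace.induction_on_inter hgenT hTpi ?_ ?_ ?_ ?_
    · simp only [measure_empty]
      exact @measurable_const _ _ _ m _
    · intro t ht
      refine Measurable.of_comap_le ?_
      rw [hm]
      exact le_iSup₂ (f := fun (s : Set X) (_ : s ∈ T) =>
        MeasurableSpace.comap (fun P : ProbabilityMeasure X => (P : Measure X) s)
          inferInstance) t ht
    · intro t ht hC
      have : (fun P : ProbabilityMeasure X => (P : Measure X) tᶜ)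
          = fun P : ProbabilityMeasure X => 1 - (P : Measure X) t := by
        funext P
        rw [measure_compl ht (measure_ne_top _ _), measure_univ]
      rw [this]
      exact Measurable.const_sub hC 1
    · intro f hdisj hfm hC
      have : (fun P : ProbabilityMeasure X => (P : Measure X) (⋃ i, f i))
          = fun P : ProbabilityMeasure X => ∑' i, (P : Measure X) (f i) := by
        funext P
        exact measure_iUnion hdisj hfm
      rw [this]
      exact Measurable.ennreal_tsum hC
  have heq : (probabilityMeasureMeasurableSpace : MeasurableSpace (ProbabilityMeasure X)) = m := by
    refine le_antisymm ?_ ?_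
    · have hval : @Measurable _ _ m _ (fun P : ProbabilityMeasure X => (P : Measure X)) :=
        @Measure.measurable_of_measurable_coe _ _ _ m _ fun s hs => key hs
      exact MeasurableSpace.comap_le_iff_le_map.2 (measurable_iff_le_map.1 hval)
    · refine iSup₂_le fun s hs => ?_
      have h2 : @Measurable _ _ probabilityMeasureMeasurableSpace _
          (fun P : ProbabilityMeasure X => (P : Measure X) s) :=
        (Measure.measurable_coe (hTmeas s hs)).comp
          (@measurable_subtype_coe (Measure X) _ _)
      exact measurable_iff_comap_le.1 h2
  show @MeasurableSpace.CountablyGenerated (ProbabilityMeasure X) probabilityMeasureMeasurableSpace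
  rw [heq]
  exact hmcg
end

section
/- Let X and Y be measurable spaces such that the σ-algebra of Y is countably generated and separates points (for any two distinct points of Y there is a measurable set containing exactly one of them). Let κ be a Markov kernel from X to Y such that κ(x)(B) ∈ {0,1} for every x ∈ X and every measurable B ⊆ Y. Then there exists a measurable function f : X → Y such that κ is the deterministic kernel of f, i.e., κ(x) is the Dirac measure at f(x) for every x ∈ X. -/
open MeasureTheory ProbabilityTheory MeasurableSpace Set

lemma zero_one_eq_dirac {Y : Type*} [MeasurableSpace Y] [CountablyGenerated Y]
    (μ : Measure Y) [IsProbabilityMeasure μ]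
    (hμ : ∀ B : Set Y, MeasurableSet B → μ B = 0 ∨ μ B = 1) :
    ∃ y : Y, μ = Measure.dirac y ∧
      y ∈ ⋂ n, if μ (natGeneratingSequence Y n) = 1
        then natGeneratingSequence Y n else (natGeneratingSequence Y n)ᶜ := by
  set g := natGeneratingSequence Y with hg
  set S : Set Y := ⋂ n, if μ (g n) = 1 then g n else (g n)ᶜ with hS
  have hScompl : μ Sᶜ = 0 := by
    rw [hS, compl_iInter]
    refine le_antisymm (le_trans (measure_iUnion_le _) ?_) zero_le
    have : ∀ n, μ (if μ (g n) = 1 then g n else (g n)ᶜ)ᶜ = 0 := by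
      intro n
      by_cases h1 : μ (g n) = 1
      · have := measurableSet_natGeneratingSequence (α := Y) n
        rw [if_pos h1]; exact (prob_compl_eq_zero_iff this).mpr h1
      · have h0 : μ (g n) = 0 :=
          (hμ _ (measurableSet_natGeneratingSequence n)).resolve_right h1
        simp [h1, compl_compl, h0]
    simp [this]
  have hSmeas : MeasurableSet S := by
    refine MeasurableSet.iInter fun n => ?_
    by_cases h1 : μ (g n) = 1
    · rw [if_pos h1]; exact measurableSet_natGeneratingSequence n
    · rw [if_neg h1]; exact (measurableSet_natGeneratingSequence n).compl
  have hSone : μ S = 1 := by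
    rwa [← prob_compl_eq_zero_iff hSmeas]
  have hne : S.Nonempty := nonempty_of_measure_ne_zero (by rw [hSone]; exact one_ne_zero)
  obtain ⟨y, hy⟩ := hne
  refine ⟨y, ?_, hy⟩
  -- key: for all measurable B, μ B = 1 ↔ y ∈ B
  have key : ∀ B : Set Y, MeasurableSet B → (MeasurableSet B ∧ (μ B = 1 ↔ y ∈ B)) := by
    intro B hB
    have hB' : MeasurableSet[generateFrom (Set.range g)] B := by
      rw [hg, generateFrom_natGeneratingSequence Y]; exact hB
    refine generateFrom_induction (Set.range g)
      (fun s _ => MeasurableSet s ∧ (μ s = 1 ↔ y ∈ s)) ?_ ?_ ?_ ?_ B hB'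
    · rintro t ⟨n, rfl⟩ -
      refine ⟨measurableSet_natGeneratingSequence n, ?_⟩
      have hyS := hy
      rw [hS, mem_iInter] at hyS
      have hyn := hyS n
      constructor
      · intro h1; simpa [h1] using hyn
      · intro hyB
        rcases hμ (g n) (measurableSet_natGeneratingSequence n) with h0 | h1
        · have h1' : μ (g n) ≠ 1 := by rw [h0]; exact zero_ne_one
          simp only [if_neg h1'] at hyn
          exact absurd hyB hyn
        · exact h1
    · refine ⟨MeasurableSet.empty, ?_⟩; simp
    · rintro t - ⟨ht, hiff⟩
      refine ⟨ht.compl, ?_⟩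
      rw [prob_compl_eq_one_iff ht, mem_compl_iff, ← hiff]
      rcases hμ t ht with h0 | h1
      · simp [h0]
      · simp [h1]
    · rintro B' hBm hB2
      refine ⟨MeasurableSet.iUnion fun n => (hB2 n).1, ?_⟩
      constructor
      · intro hU
        by_contra hy'
        have h0 : ∀ n, μ (B' n) = 0 := by
          intro n
          rcases hμ (B' n) (hB2 n).1 with h | h
          · exact h
          · exact absurd ((hB2 n).2.mp h) (fun hm => hy' (mem_iUnion.mpr ⟨n, hm⟩))
        have : μ (⋃ n, B' n) = 0 := by
          refine le_antisymm (le_trans (measure_iUnion_le _) ?_) zero_le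
          simp [h0]
        rw [this] at hU
        exact zero_ne_one hU
      · intro hy'
        obtain ⟨n, hn⟩ := mem_iUnion.mp hy'
        have h1 : μ (B' n) = 1 := (hB2 n).2.mpr hn
        refine le_antisymm prob_le_one ?_
        rw [← h1]
        exact measure_mono (subset_iUnion B' n)
  refine Measure.ext fun B hB => ?_
  obtain ⟨-, hiff⟩ := key B hB
  rw [Measure.dirac_apply' y hB]
  by_cases hyB : y ∈ B
  · rw [hiff.mpr hyB]; simp [hyB]
  · have h1 : μ B ≠ 1 := fun h => hyB (hiff.mp h)
    rw [(hμ B hB).resolve_right h1]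
    simp [hyB]

theorem stmt_8 {X Y : Type*} [MeasurableSpace X] [MeasurableSpace Y]
    [MeasurableSpace.CountablyGenerated Y] [MeasurableSpace.SeparatesPoints Y]
    (κ : Kernel X Y) [IsMarkovKernel κ]
    (hκ : ∀ (x : X) (B : Set Y), MeasurableSet B → κ x B = 0 ∨ κ x B = 1) :
    ∃ f : X → Y, Measurable f ∧ ∀ x : X, κ x = Measure.dirac (f x) := by
  have h : ∀ x : X, ∃ y : Y, κ x = Measure.dirac y ∧
      y ∈ ⋂ n, if κ x (natGeneratingSequence Y n) = 1
        then natGeneratingSequence Y n else (natGeneratingSequence Y n)ᶜ :=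
    fun x => zero_one_eq_dirac (κ x) (hκ x)
  choose f hf _ using h
  refine ⟨f, ?_, hf⟩
  intro B hB
  have hpre : f ⁻¹' B = {x | κ x B = 1} := by
    ext x
    simp only [mem_preimage, mem_setOf_eq, hf x]
    rw [Measure.dirac_apply' _ hB]
    by_cases hxB : f x ∈ B <;> simp [hxB]
  rw [hpre]
  exact (κ.measurable_coe hB) (measurableSet_singleton 1)
end

section
/- Let X and Y be measurable spaces with countably generated σ-algebras, and let J be a probability measure on X × Y (with the product σ-algebra) whose marginals P_X = J.map(fst) and P_Y = J.map(snd) are perfect. Then there exists a Markov kernel f from Y to X such that P_Y.bind(f) = P_X and, for all measurable A ⊆ X and B ⊆ Y, J(A × B) = ∫_B f(y)(A) dP_Y(y). -/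
open MeasureTheory ProbabilityTheory
open scoped ENNReal

/-- A measure `μ` on a measurable space `Z` is *perfect* if for every measurable
function `g : Z → ℝ` there exists a Borel set `E ⊆ range g` with
`μ (g ⁻¹' E) = μ univ`. -/
def IsPerfect {Z : Type*} [MeasurableSpace Z] (μ : Measure Z) : Prop :=
  ∀ g : Z → ℝ, Measurable g →
    ∃ E : Set ℝ, MeasurableSet E ∧ E ⊆ Set.range g ∧ μ (g ⁻¹' E) = μ Set.univ

/-- Any countably generated measurable space has a measurable map to `ℝ` that
generates its σ-algebra. -/
lemma exists_gen_real (α : Type*) [m : MeasurableSpace α]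
    [MeasurableSpace.CountablyGenerated α] :
    ∃ g : α → ℝ, Measurable g ∧ ∀ A : Set α, MeasurableSet A →
      ∃ T : Set ℝ, MeasurableSet T ∧ A = g ⁻¹' T := by
  obtain ⟨e, he⟩ := exists_measurableEmbedding_real (ℕ → Bool)
  refine ⟨e ∘ MeasurableSpace.mapNatBool α,
    he.measurable.comp (MeasurableSpace.measurable_mapNatBool α), ?_⟩
  intro A hA
  have hcomap : m ≤ MeasurableSpace.comap (MeasurableSpace.mapNatBool α) inferInstance := by
    conv_lhs => rw [← MeasurableSpace.generateFrom_natGeneratingSequence α]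
    apply MeasurableSpace.generateFrom_le
    rintro - ⟨n, rfl⟩
    refine ⟨{y | y n = true}, ?_, ?_⟩
    · have : Measurable fun y : ℕ → Bool => y n := measurable_pi_apply n
      exact this (measurableSet_singleton true)
    ext x
    simp [MeasurableSpace.mapNatBool]
  obtain ⟨S, hS, hSA⟩ := hcomap A hA
  refine ⟨e '' S, he.measurableSet_image.mpr hS, ?_⟩
  rw [← hSA]
  ext x
  simp only [Set.mem_preimage, Function.comp_apply, he.injective.mem_set_image]

theorem stmt_10 {X Y : Type*} [MeasurableSpace X] [MeasurableSpace Y]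
    [MeasurableSpace.CountablyGenerated X] [MeasurableSpace.CountablyGenerated Y]
    (J : Measure (X × Y)) [IsProbabilityMeasure J]
    (hPX : IsPerfect (J.map Prod.fst)) (hPY : IsPerfect (J.map Prod.snd)) :
    ∃ f : Kernel Y X, IsMarkovKernel f ∧
      (J.map Prod.snd).bind (fun y => f y) = J.map Prod.fst ∧
      ∀ (A : Set X) (B : Set Y), MeasurableSet A → MeasurableSet B →
        J (A ×ˢ B) = ∫⁻ y in B, f y A ∂(J.map Prod.snd) := by
  classical
  obtain ⟨gX, hgX, hgenX⟩ := exists_gen_real X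
  obtain ⟨gY, hgY, hgenY⟩ := exists_gen_real Y
  have hPXprob : IsProbabilityMeasure (J.map (Prod.fst : X × Y → X)) :=
    Measure.isProbabilityMeasure_map measurable_fst.aemeasurable
  have hPYprob : IsProbabilityMeasure (J.map (Prod.snd : X × Y → Y)) :=
    Measure.isProbabilityMeasure_map measurable_snd.aemeasurable
  obtain ⟨E, hE, hErange, hEfull⟩ := hPX gX hgX
  -- X is nonempty
  have hXYne : Nonempty (X × Y) := by
    by_contra h
    rw [not_nonempty_iff] at h
    have h1 : J Set.univ = 1 := measure_univ
    rw [Set.univ_eq_empty_iff.mpr h, measure_empty] at h1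
    exact zero_ne_one h1
  obtain ⟨x₀, _⟩ := hXYne.some
  -- the joint pushforward on ℝ × ℝ, with Y-coordinate first
  set h : X × Y → ℝ × ℝ := fun p => (gY p.2, gX p.1) with hh
  have hhm : Measurable h := (hgY.comp measurable_snd).prodMk (hgX.comp measurable_fst)
  set ρ : Measure (ℝ × ℝ) := J.map h with hρ
  have hρprob : IsProbabilityMeasure ρ := Measure.isProbabilityMeasure_map hhm.aemeasurable
  have hfstρ : ρ.fst = (J.map Prod.snd).map gY := by
    rw [Measure.fst, hρ, Measure.map_map measurable_fst hhm,
      Measure.map_map hgY measurable_snd]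
    rfl
  -- a measurable section of gX over E
  set s : ℝ → X := fun r => if hr : r ∈ E then (hErange hr).choose else x₀ with hs
  have hgs : ∀ r, gX (s r) = if r ∈ E then r else gX x₀ := by
    intro r
    by_cases hr : r ∈ E
    · simp only [hs, hr, dif_pos, if_pos]
      exact (hErange hr).choose_spec
    · simp [hs, hr]
  have hgsm : Measurable (gX ∘ s) := by
    have : (gX ∘ s) = fun r => if r ∈ E then r else gX x₀ := funext hgs
    rw [this]
    exact Measurable.ite hE measurable_id measurable_const
  have hsm : Measurable s := by
    intro A hA
    obtain ⟨T, hT, rfl⟩ := hgenX A hA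
    exact hgsm hT
  -- the kernel
  set f : Kernel Y X := (Kernel.map ρ.condKernel s).comap gY hgY with hf
  have hfM : IsMarkovKernel f := by
    have := Kernel.IsMarkovKernel.map ρ.condKernel hsm
    infer_instance
  -- κ r E = 1 a.e.
  have hint : ∫⁻ r, ρ.condKernel r E ∂ρ.fst = 1 := by
    have h1 := Measure.setLIntegral_condKernel_eq_measure_prod
      (ρ := ρ) MeasurableSet.univ hE
    rw [Measure.restrict_univ] at h1
    rw [h1, hρ, Measure.map_apply hhm (MeasurableSet.univ.prod hE)]
    have hpre : h ⁻¹' (Set.univ ×ˢ E) = Prod.fst ⁻¹' (gX ⁻¹' E) := by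
      ext p; simp [hh]
    rw [hpre, ← Measure.map_apply measurable_fst (hgX hE), hEfull]
    exact measure_univ
  have hae : ∀ᵐ r ∂ρ.fst, ρ.condKernel r E = 1 := by
    have hle : (fun r => ρ.condKernel r E) ≤ᵐ[ρ.fst] fun _ => 1 :=
      Filter.Eventually.of_forall fun r => prob_le_one
    have h2 : ∫⁻ _, (1 : ℝ≥0∞) ∂ρ.fst ≤ ∫⁻ r, ρ.condKernel r E ∂ρ.fst := by
      rw [hint, lintegral_one, measure_univ]
    have h3 := ae_eq_of_ae_le_of_lintegral_le hle (by rw [hint]; exact ENNReal.one_ne_top)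
      measurable_const.aemeasurable h2
    filter_upwards [h3] with r hr using hr
  -- key identity
  have key : ∀ A' B' : Set ℝ, MeasurableSet A' → MeasurableSet B' →
      J ((gX ⁻¹' A') ×ˢ (gY ⁻¹' B'))
        = ∫⁻ y in gY ⁻¹' B', f y (gX ⁻¹' A') ∂(J.map Prod.snd) := by
    intro A' B' hA' hB'
    have h1 : ∀ y, f y (gX ⁻¹' A') = ρ.condKernel (gY y) ((gX ∘ s) ⁻¹' A') := by
      intro y
      rw [hf, Kernel.comap_apply, Kernel.map_apply _ hsm, Measure.map_apply hsm (hgX hA')]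
      rfl
    simp_rw [h1]
    rw [← setLIntegral_map hB' (Kernel.measurable_coe ρ.condKernel (hgsm hA')) hgY, ← hfstρ]
    have h2 : ∫⁻ r in B', ρ.condKernel r ((gX ∘ s) ⁻¹' A') ∂ρ.fst
        = ∫⁻ r in B', ρ.condKernel r A' ∂ρ.fst := by
      refine lintegral_congr_ae (ae_restrict_of_ae ?_)
      filter_upwards [hae] with r hr
      have hcompl : ρ.condKernel r Eᶜ = 0 := by
        rw [measure_compl hE (measure_ne_top _ _), hr, measure_univ, tsub_self]
      have hEae : ∀ᵐ x ∂ρ.condKernel r, x ∈ E := by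
        rw [ae_iff]
        exact hcompl
      refine measure_congr (Filter.eventuallyEq_set.mpr ?_)
      filter_upwards [hEae] with x hx
      simp only [Set.mem_preimage, Function.comp_apply, hgs x, if_pos hx]
    rw [h2, Measure.setLIntegral_condKernel_eq_measure_prod hB' hA',
      hρ, Measure.map_apply hhm (hB'.prod hA')]
    congr 1
    ext p
    simp [hh, and_comm]
  refine ⟨f, hfM, ?_, ?_⟩
  · ext A hA
    obtain ⟨A', hA', rfl⟩ := hgenX A hA
    rw [Measure.bind_apply hA (Kernel.measurable f).aemeasurable]
    have hk := key A' Set.univ hA' MeasurableSet.univ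
    rw [Set.preimage_univ, Measure.restrict_univ] at hk
    rw [← hk, Measure.map_apply measurable_fst (hgX hA')]
    congr 1
    ext p
    simp
  · intro A B hA hB
    obtain ⟨A', hA', rfl⟩ := hgenX A hA
    obtain ⟨B', hB', rfl⟩ := hgenY B hB
    exact key A' B' hA' hB'
end

section
/- Let X and Y be measurable spaces with countably generated σ-algebras, let J be a probability measure on X × Y with perfect marginals P_X = J.map(fst) and P_Y = J.map(snd), and let f and f' be Markov kernels from Y to X each satisfying J(A × B) = ∫_B f(y)(A) dP_Y(y) and J(A × B) = ∫_B f'(y)(A) dP_Y(y) for all measurable A ⊆ X, B ⊆ Y. Then f(y) = f'(y) for P_Y-almost every y ∈ Y. -/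
open MeasureTheory ProbabilityTheory

lemma countable_generatePiSystem {α : Type*} {S : Set (Set α)} (hS : S.Countable) :
    Set.Countable (generatePiSystem S) := by
  have hsub : generatePiSystem S ⊆ Set.sInter '' {t : Set (Set α) | t.Finite ∧ t ⊆ S} := by
    intro s hs
    induction hs with
    | base h => exact ⟨{_}, ⟨Set.finite_singleton _, Set.singleton_subset_iff.2 h⟩, by simp⟩
    | inter _ _ _ iht ihu =>
        obtain ⟨t, ⟨htf, htS⟩, rfl⟩ := iht
        obtain ⟨u, ⟨huf, huS⟩, rfl⟩ := ihu
        exact ⟨t ∪ u, ⟨htf.union huf, Set.union_subset htS huS⟩, by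
          rw [Set.sInter_union]⟩
  exact ((Set.countable_setOf_finite_subset hS).image _).mono hsub

theorem stmt_11 {X Y : Type*} [MeasurableSpace X] [MeasurableSpace Y]
    [MeasurableSpace.CountablyGenerated X] [MeasurableSpace.CountablyGenerated Y]
    (J : Measure (X × Y)) [IsProbabilityMeasure J]
    (hPX : IsPerfect (J.map Prod.fst)) (hPY : IsPerfect (J.map Prod.snd))
    (f f' : Kernel Y X) [IsMarkovKernel f] [IsMarkovKernel f']
    (hf : ∀ (A : Set X) (B : Set Y), MeasurableSet A → MeasurableSet B →
      J (A ×ˢ B) = ∫⁻ y in B, f y A ∂(J.map Prod.snd))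
    (hf' : ∀ (A : Set X) (B : Set Y), MeasurableSet A → MeasurableSet B →
      J (A ×ˢ B) = ∫⁻ y in B, f' y A ∂(J.map Prod.snd)) :
    ∀ᵐ y ∂(J.map Prod.snd), f y = f' y := by
  set μ := J.map Prod.snd with hμ
  have : IsProbabilityMeasure μ := Measure.isProbabilityMeasure_map measurable_snd.aemeasurable
  set S := generatePiSystem (MeasurableSpace.countableGeneratingSet X) with hSdef
  have hScount : S.Countable :=
    countable_generatePiSystem MeasurableSpace.countable_countableGeneratingSet
  have hSmeas : ∀ s ∈ S, MeasurableSet s :=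
    fun s hs => generatePiSystem_measurableSet
      (fun t ht => MeasurableSpace.measurableSet_countableGeneratingSet ht) s hs
  have hgen : (inferInstance : MeasurableSpace X) = MeasurableSpace.generateFrom S := by
    rw [hSdef, generateFrom_generatePiSystem_eq,
      MeasurableSpace.generateFrom_countableGeneratingSet]
  have key : ∀ s ∈ S, ∀ᵐ y ∂μ, f y s = f' y s := by
    intro s hs
    refine ae_eq_of_forall_setLIntegral_eq_of_sigmaFinite
      (f.measurable_coe (hSmeas s hs)) (f'.measurable_coe (hSmeas s hs)) ?_
    intro B hB _
    rw [← hf s B (hSmeas s hs) hB, ← hf' s B (hSmeas s hs) hB]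
  have hall : ∀ᵐ y ∂μ, ∀ s ∈ S, f y s = f' y s := (ae_ball_iff hScount).2 key
  filter_upwards [hall] with y hy
  refine ext_of_generate_finite S hgen (isPiSystem_generatePiSystem _) hy ?_
  simp [measure_univ]
end

section
/- Let H and D be measurable spaces with countably generated σ-algebras, let P_H be a perfect probability measure on H, and let S be a Markov kernel from H to D such that the probability measure P_D := P_H.bind(S) on D is perfect. Then there exists a Markov kernel I from D to H such that for all measurable A ⊆ H and B ⊆ D, ∫_A S(h)(B) dP_H(h) = ∫_B I(d)(A) dP_D(d); moreover I is unique up to a P_D-null set: if I' is another Markov kernel from D to H satisfying the same identity for all measurable A and B, then I(d) = I'(d) for P_D-almost every d ∈ D. -/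
open MeasureTheory ProbabilityTheory

lemma countable_generatePiSystem_aux {α : Type*} {S : Set (Set α)} (hS : S.Countable) :
    (generatePiSystem S).Countable := by
  have hsub : generatePiSystem S ⊆ Set.sInter '' {t | t.Finite ∧ t ⊆ S} := by
    intro s hs
    induction hs with
    | base h =>
      exact ⟨{_}, ⟨Set.finite_singleton _, Set.singleton_subset_iff.mpr h⟩,
        Set.sInter_singleton _⟩
    | inter h_s h_t h_ne ih_s ih_t =>
      obtain ⟨F, ⟨hFf, hFs⟩, rfl⟩ := ih_s
      obtain ⟨G, ⟨hGf, hGs⟩, rfl⟩ := ih_t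
      exact ⟨F ∪ G, ⟨hFf.union hGf, Set.union_subset hFs hGs⟩, Set.sInter_union F G⟩
  exact ((Set.countable_setOf_finite_subset hS).image _).mono hsub

lemma exists_real_comap (α : Type*) [m : MeasurableSpace α]
    [MeasurableSpace.CountablyGenerated α] :
    ∃ f : α → ℝ, Measurable f ∧
      ∀ s : Set α, MeasurableSet s → ∃ t : Set ℝ, MeasurableSet t ∧ s = f ⁻¹' t := by
  obtain ⟨e, he⟩ := exists_measurableEmbedding_real (ℕ → Bool)
  set φ := MeasurableSpace.mapNatBool α with hφdef
  refine ⟨e ∘ φ, he.measurable.comp (MeasurableSpace.measurable_mapNatBool α), ?_⟩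
  have hle : m ≤ MeasurableSpace.comap (e ∘ φ) inferInstance := by
    rw [← MeasurableSpace.comap_comp, he.comap_eq]
    conv_lhs => rw [← MeasurableSpace.generateFrom_natGeneratingSequence α]
    apply MeasurableSpace.generateFrom_le
    rintro _ ⟨n, rfl⟩
    rw [MeasurableSpace.measurableSet_comap]
    have hms : MeasurableSet {y : ℕ → Bool | y n = true} := by
      have : {y : ℕ → Bool | y n = true} = (fun y : ℕ → Bool => y n) ⁻¹' {true} := rfl
      rw [this]
      exact (measurable_pi_apply n) (measurableSet_singleton true)
    refine ⟨{y : ℕ → Bool | y n = true}, hms, ?_⟩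
    ext x
    simp [hφdef, MeasurableSpace.mapNatBool]
  intro s hs
  obtain ⟨t, ht, hts⟩ := MeasurableSpace.measurableSet_comap.mp (hle s hs)
  exact ⟨t, ht, hts.symm⟩

/-- Bayesian inference: given a perfect prior `P_H` and a sampling distribution `S`
whose prior predictive `P_D = P_H.bind S` is perfect, there is an inference map `I`
satisfying the product rule, unique up to a set of `P_D`-measure zero. -/
theorem stmt_13 {H D : Type*} [MeasurableSpace H] [MeasurableSpace D]
    [MeasurableSpace.CountablyGenerated H] [MeasurableSpace.CountablyGenerated D]
    (P_H : Measure H) [IsProbabilityMeasure P_H] (hPH : IsPerfect P_H)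
    (S : Kernel H D) [IsMarkovKernel S]
    (P_D : Measure D) (hPD : P_D = P_H.bind (fun h => S h)) (hPDperf : IsPerfect P_D) :
    ∃ I : Kernel D H, IsMarkovKernel I ∧
      (∀ (A : Set H) (B : Set D), MeasurableSet A → MeasurableSet B →
        ∫⁻ h in A, S h B ∂P_H = ∫⁻ d in B, I d A ∂P_D) ∧
      ∀ (I' : Kernel D H), IsMarkovKernel I' →
        (∀ (A : Set H) (B : Set D), MeasurableSet A → MeasurableSet B →
          ∫⁻ h in A, S h B ∂P_H = ∫⁻ d in B, I' d A ∂P_D) →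
        ∀ᵐ d ∂P_D, I d = I' d := by
  classical
  obtain ⟨f, hf, hfc⟩ := exists_real_comap H
  obtain ⟨g, hg, hgc⟩ := exists_real_comap D
  -- basic facts about P_D
  have hPDapp : ∀ B : Set D, MeasurableSet B → P_D B = ∫⁻ h, S h B ∂P_H := by
    intro B hB
    rw [hPD, Measure.bind_apply hB (Kernel.measurable S).aemeasurable]
  have hPDprob : IsProbabilityMeasure P_D := by
    constructor
    rw [hPDapp Set.univ MeasurableSet.univ]
    simp
  -- the perfectness set E
  obtain ⟨E, hEm, hEr, hEfull⟩ := hPH f hf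
  have hEone : P_H (f ⁻¹' E) = 1 := by rw [hEfull, measure_univ]
  have hHne : Nonempty H := by
    by_contra h
    rw [not_nonempty_iff] at h
    have : (Set.univ : Set H) = ∅ := Set.univ_eq_empty_iff.mpr h
    have h1 : P_H Set.univ = 1 := measure_univ
    rw [this, measure_empty] at h1
    exact zero_ne_one h1
  -- a measurable section of f on E
  set s : ℝ → H := fun x => if hx : x ∈ E then (hEr hx).choose else Classical.arbitrary H with hsdef
  have hfs : ∀ x ∈ E, f (s x) = x := by
    intro x hx
    simp only [hsdef, hx, dif_pos]
    exact (hEr hx).choose_spec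
  have hsE : ∀ x ∉ E, s x = Classical.arbitrary H := by
    intro x hx
    simp only [hsdef, hx, dif_neg, not_false_iff]
  have hs : Measurable s := by
    intro A hA
    obtain ⟨A', hA', rfl⟩ := hfc A hA
    have hpre : s ⁻¹' (f ⁻¹' A') =
        (E ∩ A') ∪ (Eᶜ ∩ {x : ℝ | f (Classical.arbitrary H) ∈ A'}) := by
      ext x
      by_cases hx : x ∈ E
      · simp [Set.mem_preimage, hx, hfs x hx]
      · simp [Set.mem_preimage, hx, hsE x hx]
    rw [hpre]
    exact (hEm.inter hA').union (hEm.compl.inter (MeasurableSet.const _))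
  -- the joint measure pushed to ℝ × ℝ
  set φ : H × D → ℝ × ℝ := fun p => (g p.2, f p.1) with hφdef
  have hφ : Measurable φ := (hg.comp measurable_snd).prodMk (hf.comp measurable_fst)
  set ρ : Measure (ℝ × ℝ) := Measure.map φ (P_H ⊗ₘ S) with hρdef
  have hρprob : IsProbabilityMeasure ρ := Measure.isProbabilityMeasure_map hφ.aemeasurable
  have hρ_apply : ∀ (B' A' : Set ℝ), MeasurableSet B' → MeasurableSet A' →
      ρ (B' ×ˢ A') = ∫⁻ h in f ⁻¹' A', S h (g ⁻¹' B') ∂P_H := by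
    intro B' A' hB' hA'
    rw [hρdef, Measure.map_apply hφ (hB'.prod hA')]
    have : φ ⁻¹' (B' ×ˢ A') = (f ⁻¹' A') ×ˢ (g ⁻¹' B') := by
      ext p
      simp [hφdef, Set.mem_prod, and_comm]
    rw [this, Measure.compProd_apply_prod (hf hA') (hg hB')]
  have hfst : ρ.fst = Measure.map g P_D := by
    ext B' hB'
    rw [Measure.fst_apply hB', Measure.map_apply hg hB', hPDapp _ (hg hB')]
    have : (Prod.fst ⁻¹' B' : Set (ℝ × ℝ)) = B' ×ˢ Set.univ := by
      ext p; simp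
    rw [this, hρ_apply B' Set.univ hB' MeasurableSet.univ]
    simp
  -- the conditional kernel
  set κ : Kernel ℝ ℝ := ρ.condKernel with hκdef
  have hdis : ∀ (B' A' : Set ℝ), MeasurableSet B' → MeasurableSet A' →
      ∫⁻ y in B', κ y A' ∂(Measure.map g P_D) = ρ (B' ×ˢ A') := by
    intro B' A' hB' hA'
    rw [← hfst]
    exact Measure.setLIntegral_condKernel_eq_measure_prod hB' hA'
  -- a.e. the conditional kernel lives on E
  have hEc0 : ρ (Set.univ ×ˢ Eᶜ) = 0 := by
    rw [hρ_apply Set.univ Eᶜ MeasurableSet.univ hEm.compl]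
    have : ∀ h, S h (g ⁻¹' (Set.univ : Set ℝ)) = 1 := by intro h; simp
    rw [setLIntegral_congr_fun (hf hEm.compl) (fun h _ => this h)]
    rw [setLIntegral_one, Set.preimage_compl, measure_compl (hf hEm) (measure_ne_top _ _), hEone]
    simp
  have haeE : ∀ᵐ y ∂(Measure.map g P_D), κ y Eᶜ = 0 := by
    have h0 : ∫⁻ y, κ y Eᶜ ∂(Measure.map g P_D) = 0 := by
      have := hdis Set.univ Eᶜ MeasurableSet.univ hEm.compl
      rw [Measure.restrict_univ] at this
      rw [this, hEc0]
    exact (lintegral_eq_zero_iff (Kernel.measurable_coe κ hEm.compl)).mp h0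
  have haeD : ∀ᵐ d ∂P_D, κ (g d) Eᶜ = 0 := by
    have hms : MeasurableSet {y : ℝ | κ y Eᶜ = 0} :=
      Kernel.measurable_coe κ hEm.compl (measurableSet_singleton 0)
    exact (ae_map_iff hg.aemeasurable hms).mp haeE
  -- the inference kernel
  set I : Kernel D H := Kernel.comap (Kernel.map κ s) g hg with hIdef
  have hImk : IsMarkovKernel (Kernel.map κ s) := Kernel.IsMarkovKernel.map κ hs
  have hIm : IsMarkovKernel I := by
    rw [hIdef]
    exact Kernel.IsMarkovKernel.comap _ hg
  have hIapp : ∀ (d : D) (A : Set H), MeasurableSet A → I d A = κ (g d) (s ⁻¹' A) := by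
    intro d A hA
    rw [hIdef, Kernel.comap_apply, Kernel.map_apply _ hs, Measure.map_apply hs hA]
  -- key a.e. identification
  have hkey : ∀ (A' : Set ℝ), MeasurableSet A' →
      ∀ᵐ d ∂P_D, I d (f ⁻¹' A') = κ (g d) A' := by
    intro A' hA'
    filter_upwards [haeD] with d hd
    rw [hIapp d _ (hf hA')]
    have hae : (s ⁻¹' (f ⁻¹' A') : Set ℝ) =ᵐ[κ (g d)] A' := by
      rw [MeasureTheory.ae_eq_set]
      constructor
      · refine measure_mono_null (fun x hx => ?_) hd
        by_contra hxE
        simp only [Set.mem_compl_iff, not_not] at hxE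
        rcases hx with ⟨hx1, hx2⟩
        rw [Set.mem_preimage, Set.mem_preimage, hfs x hxE] at hx1
        exact hx2 hx1
      · refine measure_mono_null (fun x hx => ?_) hd
        by_contra hxE
        simp only [Set.mem_compl_iff, not_not] at hxE
        rcases hx with ⟨hx1, hx2⟩
        rw [Set.mem_preimage, Set.mem_preimage, hfs x hxE] at hx2
        exact hx2 hx1
    exact measure_congr hae
  -- the product rule
  have hprod : ∀ (A : Set H) (B : Set D), MeasurableSet A → MeasurableSet B →
      ∫⁻ h in A, S h B ∂P_H = ∫⁻ d in B, I d A ∂P_D := by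
    intro A B hA hB
    obtain ⟨A', hA', rfl⟩ := hfc A hA
    obtain ⟨B', hB', rfl⟩ := hgc B hB
    have h1 : ∫⁻ d in g ⁻¹' B', I d (f ⁻¹' A') ∂P_D
        = ∫⁻ d in g ⁻¹' B', κ (g d) A' ∂P_D :=
      lintegral_congr_ae (ae_restrict_of_ae (hkey A' hA'))
    have h2 : ∫⁻ d in g ⁻¹' B', κ (g d) A' ∂P_D
        = ∫⁻ y in B', κ y A' ∂(Measure.map g P_D) :=
      (setLIntegral_map hB' (Kernel.measurable_coe κ hA') hg).symm
    rw [h1, h2, hdis B' A' hB' hA', hρ_apply B' A' hB' hA']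
  refine ⟨I, hIm, hprod, ?_⟩
  -- uniqueness
  intro I' hI' hprod'
  have hae1 : ∀ (A : Set H), MeasurableSet A → ∀ᵐ d ∂P_D, I d A = I' d A := by
    intro A hA
    refine ae_eq_of_forall_setLIntegral_eq_of_sigmaFinite
      (Kernel.measurable_coe I hA) (Kernel.measurable_coe I' hA) ?_
    intro B hB _
    rw [← hprod A B hA hB, hprod' A B hA hB]
  set C : Set (Set H) := generatePiSystem (MeasurableSpace.countableGeneratingSet H) with hCdef
  have hCc : C.Countable :=
    countable_generatePiSystem_aux (MeasurableSpace.countable_countableGeneratingSet)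
  have hCms : ∀ t ∈ C, MeasurableSet t := fun t ht =>
    generatePiSystem_measurableSet
      (fun u hu => MeasurableSpace.measurableSet_countableGeneratingSet hu) t ht
  have hCgen : ‹MeasurableSpace H› = MeasurableSpace.generateFrom C := by
    rw [hCdef, generateFrom_generatePiSystem_eq,
      MeasurableSpace.generateFrom_countableGeneratingSet]
  have hCpi : IsPiSystem C := isPiSystem_generatePiSystem _
  have hae : ∀ᵐ d ∂P_D, ∀ t ∈ C, I d t = I' d t :=
    (ae_ball_iff hCc).mpr fun t ht => hae1 t (hCms t ht)
  filter_upwards [hae] with d hd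
  have h1 : IsProbabilityMeasure (I d) := hIm.isProbabilityMeasure d
  have h2 : IsProbabilityMeasure (I' d) := hI'.isProbabilityMeasure d
  refine ext_of_generate_finite C hCgen hCpi hd ?_
  rw [measure_univ, measure_univ]
end
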